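/- Let I = (f₁,…,f_s) ⊆ R, and let M ⊆ R^s be the R-submodule M = { (a₁,…,a_s) ∈ R^s : Σ_{k=1}^s a_k · ∂f_k/∂x_j ∈ I for every j = 1,…,n }. Then an element g ∈ R belongs to Δ(I) if and only if there exists (a₁,…,a_s) ∈ M with g = Σ_{k=1}^s a_k f_k. Consequently, if m̲₁,…,m̲_q generate M as an R-module, then Δ(I) is generated by the elements Σ_{k=1}^s m_{k,i} f_k for i = 1,…,q. -/

import Mathlib

/-- The partial derivative `∂f/∂xⱼ` of a formal power series `f ∈ ℂ[[x₁,…,xₙ]]`,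
defined coefficientwise. -/
noncomputable def pd {n : ℕ} (j : Fin n) (f : MvPowerSeries (Fin n) ℂ) :
    MvPowerSeries (Fin n) ℂ :=
  fun d => ((d j + 1 : ℕ) : ℂ) * MvPowerSeries.coeff (d + Finsupp.single j 1) f

open MvPowerSeries Finset in
lemma pd_coeff {n : ℕ} (j : Fin n) (f : MvPowerSeries (Fin n) ℂ) (d : Fin n →₀ ℕ) :
    MvPowerSeries.coeff d (pd j f) =
      ((d j + 1 : ℕ) : ℂ) * MvPowerSeries.coeff (d + Finsupp.single j 1) f := rfl

lemma pd_zero {n : ℕ} (j : Fin n) : pd j (0 : MvPowerSeries (Fin n) ℂ) = 0 := by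
  ext d; rw [pd_coeff]; simp

lemma pd_add {n : ℕ} (j : Fin n) (a b : MvPowerSeries (Fin n) ℂ) :
    pd j (a + b) = pd j a + pd j b := by
  ext d
  simp only [map_add, pd_coeff, mul_add]

open Finset in
lemma shift_sum {n : ℕ} (j : Fin n) (d : Fin n →₀ ℕ)
    (F : ((Fin n →₀ ℕ) × (Fin n →₀ ℕ)) → ℂ) :
    (Finset.HasAntidiagonal.antidiagonal (d + (Finsupp.single j 1 : Fin n →₀ ℕ))).sum (fun p => ((p.1 j : ℕ) : ℂ) * F p) =
      (Finset.HasAntidiagonal.antidiagonal d).sum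
        (fun p => ((p.1 j + 1 : ℕ) : ℂ) * F (p.1 + Finsupp.single j 1, p.2)) := by
  classical
  set e : Fin n →₀ ℕ := Finsupp.single j 1 with he
  rw [← Finset.sum_filter_of_ne (p := fun p : (Fin n →₀ ℕ) × (Fin n →₀ ℕ) => p.1 j ≠ 0)
      (by intro p hp h h0; exact h (by rw [h0]; simp))]
  refine Finset.sum_nbij' (fun p => (p.1 - e, p.2)) (fun p => (p.1 + e, p.2)) ?_ ?_ ?_ ?_ ?_
  · rintro ⟨u, v⟩ h
    simp only [Finset.mem_filter, Finset.HasAntidiagonal.mem_antidiagonal] at h ⊢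
    obtain ⟨h1, h2⟩ := h
    have hle : e ≤ u := by
      rw [he, Finsupp.single_le_iff]
      omega
    have : (u - e) + v + e = d + e := by
      rw [add_right_comm, tsub_add_cancel_of_le hle, h1]
    exact add_right_cancel this
  · rintro ⟨u, v⟩ h
    simp only [Finset.mem_filter, Finset.HasAntidiagonal.mem_antidiagonal] at h ⊢
    refine ⟨by rw [add_right_comm, h], ?_⟩
    simp [he, Finsupp.add_apply]
  · rintro ⟨u, v⟩ h
    simp only [Finset.mem_filter, Finset.HasAntidiagonal.mem_antidiagonal] at h
    have hle : e ≤ u := by rw [he, Finsupp.single_le_iff]; omega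
    simp [tsub_add_cancel_of_le hle]
  · rintro ⟨u, v⟩ h
    simp
  · rintro ⟨u, v⟩ h
    simp only [Finset.mem_filter, Finset.HasAntidiagonal.mem_antidiagonal] at h
    have hle : e ≤ u := by rw [he, Finsupp.single_le_iff]; omega
    have h1 : (u - e) j + 1 = u j := by
      simp only [he, Finsupp.tsub_apply, Finsupp.single_eq_same]
      omega
    simp only
    rw [h1, tsub_add_cancel_of_le hle]

open Finset in
lemma pd_mul {n : ℕ} (j : Fin n) (a b : MvPowerSeries (Fin n) ℂ) :
    pd j (a * b) = pd j a * b + a * pd j b := by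
  classical
  ext d
  set e : Fin n →₀ ℕ := Finsupp.single j 1 with he
  rw [map_add, pd_coeff, MvPowerSeries.coeff_mul, MvPowerSeries.coeff_mul,
    MvPowerSeries.coeff_mul, Finset.mul_sum]
  have step1 : ∀ p ∈ Finset.HasAntidiagonal.antidiagonal (d + e),
      ((d j + 1 : ℕ) : ℂ) * (MvPowerSeries.coeff p.1 a * MvPowerSeries.coeff p.2 b)
      = ((p.1 j : ℕ) : ℂ) * (MvPowerSeries.coeff p.1 a * MvPowerSeries.coeff p.2 b)
      + ((p.2 j : ℕ) : ℂ) * (MvPowerSeries.coeff p.1 a * MvPowerSeries.coeff p.2 b) := by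
    rintro ⟨u, v⟩ hp
    rw [Finset.HasAntidiagonal.mem_antidiagonal] at hp
    have : u j + v j = d j + 1 := by
      have := congrArg (fun w => w j) hp
      simpa [he, Finsupp.add_apply] using this
    rw [← add_mul]
    congr 1
    rw [← Nat.cast_add, this]
  rw [Finset.sum_congr rfl step1, Finset.sum_add_distrib]
  congr 1
  · rw [shift_sum j d (fun p => MvPowerSeries.coeff p.1 a * MvPowerSeries.coeff p.2 b)]
    refine Finset.sum_congr rfl ?_
    rintro ⟨u, v⟩ hp
    rw [pd_coeff]; ring
  · -- snd version: swap
    rw [← Finset.HasAntidiagonal.map_swap_antidiagonal (n := d + e), ← Finset.HasAntidiagonal.map_swap_antidiagonal (n := d),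
      Finset.sum_map, Finset.sum_map]
    simp only [Function.Embedding.coeFn_mk, Prod.fst_swap, Prod.snd_swap]
    rw [shift_sum j d (fun p => MvPowerSeries.coeff p.2 a * MvPowerSeries.coeff p.1 b)]
    refine Finset.sum_congr rfl ?_
    rintro ⟨u, v⟩ hp
    simp only
    rw [pd_coeff]; ring

lemma pd_sum {n : ℕ} {ι : Type*} (j : Fin n) (s : Finset ι) (F : ι → MvPowerSeries (Fin n) ℂ) :
    pd j (∑ k ∈ s, F k) = ∑ k ∈ s, pd j (F k) := by
  induction s using Finset.cons_induction with
  | empty => simp [pd_zero]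
  | cons a s ha ih => rw [Finset.sum_cons, Finset.sum_cons, pd_add, ih]

/-- The Tjurina ideal `T(f) = (f, ∂f/∂x₁, …, ∂f/∂xₙ)`. -/
noncomputable def Tj {n : ℕ} (f : MvPowerSeries (Fin n) ℂ) : Ideal (MvPowerSeries (Fin n) ℂ) :=
  Ideal.span ({f} ∪ Set.range fun j => pd j f)

/-- The set of antiderivatives `Δ(I) = {f : T(f) ⊆ I}`. -/
def Del {n : ℕ} (I : Ideal (MvPowerSeries (Fin n) ℂ)) : Set (MvPowerSeries (Fin n) ℂ) :=
  {f | Tj f ≤ I}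

lemma mem_Del {n : ℕ} (I : Ideal (MvPowerSeries (Fin n) ℂ)) (g : MvPowerSeries (Fin n) ℂ) :
    g ∈ Del I ↔ g ∈ I ∧ ∀ j, pd j g ∈ I := by
  simp only [Del, Set.mem_setOf_eq, Tj, Ideal.span_le, Set.union_subset_iff,
    Set.singleton_subset_iff, Set.range_subset_iff, SetLike.mem_coe]

/-- The Tjurina ideal of an arbitrary set of power series (for an ideal `J`, applied to its
carrier this computes `T(J) = T(g₁) + … + T(g_q)` for any system of generators). -/
noncomputable def Tset {n : ℕ} (A : Set (MvPowerSeries (Fin n) ℂ)) :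
    Ideal (MvPowerSeries (Fin n) ℂ) :=
  Ideal.span (A ∪ {g | ∃ f ∈ A, ∃ j, g = pd j f})

/-- The maximal ideal `𝔪 = (x₁,…,xₙ)` of `ℂ[[x₁,…,xₙ]]`. -/
noncomputable def mm (n : ℕ) : Ideal (MvPowerSeries (Fin n) ℂ) :=
  Ideal.span (Set.range (MvPowerSeries.X : Fin n → MvPowerSeries (Fin n) ℂ))

lemma swap_sum {n s q : ℕ} (c : Fin q → MvPowerSeries (Fin n) ℂ)
    (m : Fin q → Fin s → MvPowerSeries (Fin n) ℂ) (f : Fin s → MvPowerSeries (Fin n) ℂ) :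
    ∑ i, c i * (∑ k, m i k * f k) = ∑ k, (∑ i, c i * m i k) * f k := by
  simp_rw [Finset.mul_sum, Finset.sum_mul, mul_assoc]
  exact Finset.sum_comm

/-- computation of `Δ(I)` from generators `I = (f₁,…,f_s)` via the module
`M = {a ∈ R^s : Σ aₖ ∂fₖ/∂xⱼ ∈ I for all j}`. -/
theorem stmt_11 {n s : ℕ} (f : Fin s → MvPowerSeries (Fin n) ℂ)
    (I : Ideal (MvPowerSeries (Fin n) ℂ)) (hI : I = Ideal.span (Set.range f))
    (M : Submodule (MvPowerSeries (Fin n) ℂ) (Fin s → MvPowerSeries (Fin n) ℂ))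
    (hM : (M : Set (Fin s → MvPowerSeries (Fin n) ℂ)) =
      {a | ∀ j : Fin n, (∑ k, a k * pd j (f k)) ∈ I}) :
    (∀ g : MvPowerSeries (Fin n) ℂ, g ∈ Del I ↔ ∃ a ∈ M, g = ∑ k, a k * f k) ∧
    (∀ (q : ℕ) (m : Fin q → (Fin s → MvPowerSeries (Fin n) ℂ)),
      Submodule.span (MvPowerSeries (Fin n) ℂ) (Set.range m) = M →
      Del I = ↑(Ideal.span (Set.range fun i => ∑ k, m i k * f k))) := by
  classical
  have hf : ∀ k, f k ∈ I := fun k => hI ▸ Ideal.subset_span ⟨k, rfl⟩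
  have hMmem : ∀ a : Fin s → MvPowerSeries (Fin n) ℂ,
      a ∈ M ↔ ∀ j : Fin n, (∑ k, a k * pd j (f k)) ∈ I := by
    intro a
    rw [← SetLike.mem_coe, hM]
    rfl
  have key : ∀ (a : Fin s → MvPowerSeries (Fin n) ℂ) (j : Fin n),
      pd j (∑ k, a k * f k) = (∑ k, pd j (a k) * f k) + ∑ k, a k * pd j (f k) := by
    intro a j
    rw [pd_sum, ← Finset.sum_add_distrib]
    exact Finset.sum_congr rfl fun k _ => pd_mul j (a k) (f k)
  have hS1 : ∀ a : Fin s → MvPowerSeries (Fin n) ℂ, ∀ j : Fin n,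
      (∑ k, pd j (a k) * f k) ∈ I :=
    fun a j => Ideal.sum_mem I fun k _ => Ideal.mul_mem_left I _ (hf k)
  have main : ∀ g : MvPowerSeries (Fin n) ℂ, g ∈ Del I ↔ ∃ a ∈ M, g = ∑ k, a k * f k := by
    intro g
    rw [mem_Del]
    constructor
    · rintro ⟨hgI, hpd⟩
      have hgI' : g ∈ Ideal.span (Set.range f) := hI ▸ hgI
      rw [← Ideal.submodule_span_eq] at hgI'
      obtain ⟨a, ha⟩ := (Submodule.mem_span_range_iff_exists_fun _).mp hgI'
      simp only [smul_eq_mul] at ha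
      refine ⟨a, ?_, ha.symm⟩
      rw [hMmem]
      intro j
      have h1 : pd j (∑ k, a k * f k) ∈ I := ha.symm ▸ hpd j
      have h2 : (∑ k, a k * pd j (f k)) =
          pd j (∑ k, a k * f k) - (∑ k, pd j (a k) * f k) := by
        rw [key a j]; ring
      rw [h2]
      exact Ideal.sub_mem I h1 (hS1 a j)
    · rintro ⟨a, haM, rfl⟩
      refine ⟨Ideal.sum_mem I fun k _ => Ideal.mul_mem_left I _ (hf k), fun j => ?_⟩
      rw [key a j]
      exact Ideal.add_mem I (hS1 a j) ((hMmem a).mp haM j)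
  refine ⟨main, ?_⟩
  intro q m hspan
  ext g
  simp only [SetLike.mem_coe]
  constructor
  · intro hg
    obtain ⟨a, haM, rfl⟩ := (main g).mp hg
    rw [← hspan] at haM
    obtain ⟨c, hc⟩ := (Submodule.mem_span_range_iff_exists_fun _).mp haM
    have ha : ∀ k, a k = ∑ i, c i * m i k := by
      intro k
      rw [← hc]
      simp [Finset.sum_apply]
    have : (∑ k, a k * f k) = ∑ i, c i * (∑ k, m i k * f k) := by
      rw [swap_sum]
      exact Finset.sum_congr rfl fun k _ => by rw [ha k]
    rw [this]
    exact Ideal.sum_mem _ fun i _ =>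
      Ideal.mul_mem_left _ _ (Ideal.subset_span ⟨i, rfl⟩)
  · intro hg
    rw [← Ideal.submodule_span_eq] at hg
    obtain ⟨c, hc⟩ := (Submodule.mem_span_range_iff_exists_fun _).mp hg
    simp only [smul_eq_mul] at hc
    set a : Fin s → MvPowerSeries (Fin n) ℂ := fun k => ∑ i, c i * m i k with hadef
    have haM : a ∈ M := by
      have : a = ∑ i, c i • m i := by
        funext k
        simp [hadef, Finset.sum_apply]
      rw [this]
      exact Submodule.sum_mem M fun i _ => Submodule.smul_mem M _
        (hspan ▸ Submodule.subset_span ⟨i, rfl⟩)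
    refine (main g).mpr ⟨a, haM, ?_⟩
    rw [← hc, swap_sum]
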